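/- Let R be an arbitrary ring and H a finite index subgroup of (R,+). Then the set H + H·R (where H·R = {hr : h ∈ H, r ∈ R}) contains a two-sided ideal of R of finite additive index. -/

import Mathlib

open Pointwise

section Aux

variable {R : Type*} [NonUnitalRing R]

/-- The subgroup of `y` such that `π (y * r) ∈ M` for all `r`. -/
def auxX (H : AddSubgroup R) (M : AddSubgroup (R ⧸ H)) : AddSubgroup R where
  carrier := {y | ∀ r : R, QuotientAddGroup.mk' H (y * r) ∈ M}
  zero_mem' := fun r => by simpa using M.zero_mem
  add_mem' := by
    intro a b ha hb r
    simpa [add_mul] using M.add_mem (ha r) (hb r)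
  neg_mem' := by
    intro a ha r
    simpa [neg_mul] using M.neg_mem (ha r)

/-- The image of `c*R` in `R ⧸ H`. -/
def auxN (H : AddSubgroup R) (c : R) : AddSubgroup (R ⧸ H) :=
  AddSubgroup.map ((QuotientAddGroup.mk' H).comp (AddMonoidHom.mulLeft c)) ⊤

lemma mem_auxX {H : AddSubgroup R} {M : AddSubgroup (R ⧸ H)} {y : R} :
    y ∈ auxX H M ↔ ∀ r : R, QuotientAddGroup.mk' H (y * r) ∈ M := Iff.rfl

end Aux

/-- For an arbitrary ring R and a finite index additive subgroup H of (R,+),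
the set H + H·R contains a two-sided ideal of R of finite additive index. -/
theorem stmt_5 {R : Type*} [NonUnitalRing R] (H : AddSubgroup R) (hH : H.FiniteIndex) :
    ∃ I : AddSubgroup R,
      (∀ r x : R, x ∈ I → r * x ∈ I) ∧
      (∀ r x : R, x ∈ I → x * r ∈ I) ∧
      I.FiniteIndex ∧
      (I : Set R) ⊆ (H : Set R) + (H : Set R) * Set.univ := by
  classical
  haveI := hH
  set π := QuotientAddGroup.mk' H with hπ
  haveI : Finite (R ⧸ H) := inferInstance
  haveI : Fintype (R ⧸ H) := Fintype.ofFinite _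
  haveI : Finite (AddSubgroup (R ⧸ H)) :=
    Finite.of_injective (fun M => (M : Set (R ⧸ H))) SetLike.coe_injective
  haveI : Fintype (AddSubgroup (R ⧸ H)) := Fintype.ofFinite _
  set s : Finset (AddSubgroup (R ⧸ H) × (R ⧸ H)) :=
    Finset.univ.filter (fun p => ∃ c ∈ H, p.1 = auxN H c) with hs
  -- the coset cover
  have hcovers : ⋃ i ∈ s, (i.2.out : R) +ᵥ ((fun p : AddSubgroup (R ⧸ H) × (R ⧸ H) =>
      auxX H p.1 ⊓ H) i : Set R) = Set.univ := by
    ext x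
    simp only [Set.mem_univ, iff_true, Set.mem_iUnion]
    set h := x - (π x).out with hhdef
    have hπout : π ((π x).out) = π x := QuotientAddGroup.out_eq' _
    have hhH : h ∈ H := by
      have : π h = 0 := by rw [hhdef, map_sub, hπout, sub_self]
      rwa [hπ, QuotientAddGroup.mk'_apply, QuotientAddGroup.eq_zero_iff] at this
    refine ⟨(auxN H h, π x), ?_, ?_⟩
    · simp only [hs, Finset.mem_filter, Finset.mem_univ, true_and]
      exact ⟨h, hhH, rfl⟩
    · rw [Set.mem_vadd_set_iff_neg_vadd_mem]
      have hx' : -(π x).out + x = h := by rw [hhdef]; abel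
      rw [vadd_eq_add, hx']
      refine ⟨?_, hhH⟩
      intro r
      exact ⟨r, trivial, rfl⟩
  obtain ⟨i, his, hKfi⟩ := AddSubgroup.exists_finiteIndex_of_leftCoset_cover hcovers
  obtain ⟨c, hcH, hMc⟩ : ∃ c ∈ H, i.1 = auxN H c := by
    simpa only [hs, Finset.mem_filter, Finset.mem_univ, true_and] using his
  have hKfi' : (auxX H i.1 ⊓ H).FiniteIndex := hKfi
  set X : AddSubgroup R := auxX H i.1 with hX
  haveI hXfi : X.FiniteIndex :=
    @AddSubgroup.finiteIndex_of_le R _ (X ⊓ H) X hKfi' inf_le_left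
  set C : AddSubgroup R := AddSubgroup.map (AddMonoidHom.mulLeft c) ⊤ with hC
  set G : AddSubgroup R := H ⊔ C with hG
  haveI hGfi : G.FiniteIndex := AddSubgroup.finiteIndex_of_le le_sup_left
  -- key: X · R ⊆ G
  have key1 : ∀ y ∈ X, ∀ r : R, y * r ∈ G := by
    intro y hy r
    have h1 : π (y * r) ∈ auxN H c := by rw [← hMc]; exact hy r
    obtain ⟨r', -, hr'⟩ := h1
    have h2 : y * r - c * r' ∈ H := by
      have : π (y * r - c * r') = 0 := by
        rw [map_sub]
        have : π (c * r') = π (y * r) := hr'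
        rw [this, sub_self]
      rwa [hπ, QuotientAddGroup.mk'_apply, QuotientAddGroup.eq_zero_iff] at this
    have h3 : y * r = (y * r - c * r') + c * r' := by abel
    rw [h3]
    exact add_mem (AddSubgroup.mem_sup_left h2)
      (AddSubgroup.mem_sup_right ⟨r', trivial, rfl⟩)
  set W : AddSubgroup R := AddSubgroup.closure ((X : Set R) * (Set.univ : Set R)) with hW
  set P : AddSubgroup R := (X ⊓ G) ⊔ W with hP
  -- P is a right ideal
  have hPr : ∀ p ∈ P, ∀ t : R, p * t ∈ P := by
    intro p hp t
    have hle : (X ⊓ G) ⊔ W ≤ P.comap (AddMonoidHom.mulRight t) := by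
      refine sup_le ?_ ?_
      · intro y hy
        simp only [AddSubgroup.mem_comap, AddMonoidHom.coe_mulRight]
        exact AddSubgroup.mem_sup_right
          (AddSubgroup.subset_closure (Set.mul_mem_mul hy.1 (Set.mem_univ t)))
      · rw [hW, AddSubgroup.closure_le]
        rintro z ⟨y, hy, r, -, rfl⟩
        simp only [Set.mem_preimage, SetLike.mem_coe, AddSubgroup.mem_comap,
          AddMonoidHom.coe_mulRight]
        rw [mul_assoc]
        exact AddSubgroup.mem_sup_right
          (AddSubgroup.subset_closure (Set.mul_mem_mul hy (Set.mem_univ (r * t))))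
    exact hle hp
  -- P ≤ G
  have hPG : P ≤ G := by
    refine sup_le inf_le_right ?_
    rw [hW, AddSubgroup.closure_le]
    rintro z ⟨y, hy, r, -, rfl⟩
    exact key1 y hy r
  haveI : (X ⊓ G).FiniteIndex := inferInstance
  haveI hPfi : P.FiniteIndex := AddSubgroup.finiteIndex_of_le le_sup_left
  haveI : Finite (R ⧸ P) := inferInstance
  set πP := QuotientAddGroup.mk' P with hπP
  set I : AddSubgroup R := P ⊓ ⨅ q : R ⧸ P, P.comap (AddMonoidHom.mulLeft q.out) with hI
  -- all left multiples of elements of I are in P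
  have hIP : ∀ x ∈ I, ∀ t : R, t * x ∈ P := by
    intro x hx t
    obtain ⟨hxP, hxq⟩ := hx
    have hall : ∀ q : R ⧸ P, (q.out : R) * x ∈ P := by
      intro q
      have := AddSubgroup.mem_iInf.mp hxq q
      simpa only [AddSubgroup.mem_comap, AddMonoidHom.coe_mulLeft] using this
    have hto : πP ((πP t).out) = πP t := QuotientAddGroup.out_eq' _
    have htP : t - (πP t).out ∈ P := by
      have : πP (t - (πP t).out) = 0 := by rw [map_sub, hto, sub_self]
      rwa [hπP, QuotientAddGroup.mk'_apply, QuotientAddGroup.eq_zero_iff] at this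
    have hsplit : t * x = (t - (πP t).out) * x + (πP t).out * x := by
      rw [sub_mul]; abel
    rw [hsplit]
    exact add_mem (hPr _ htP x) (hall _)
  -- finite index of I
  have hcomapfi : ∀ t : R, (P.comap (AddMonoidHom.mulLeft t)).FiniteIndex := by
    intro t
    have hk : P.comap (AddMonoidHom.mulLeft t) = (πP.comp (AddMonoidHom.mulLeft t)).ker := by
      ext x
      simp only [AddSubgroup.mem_comap, AddMonoidHom.mem_ker, AddMonoidHom.coe_comp,
        Function.comp_apply, AddMonoidHom.coe_mulLeft, hπP, QuotientAddGroup.mk'_apply,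
        QuotientAddGroup.eq_zero_iff]
    rw [hk]
    refine ⟨?_⟩
    rw [AddSubgroup.index_ker]
    exact Nat.card_ne_zero.mpr ⟨⟨0, 0, map_zero _⟩, inferInstance⟩
  haveI : (⨅ q : R ⧸ P, P.comap (AddMonoidHom.mulLeft (Quotient.out q))).FiniteIndex :=
    AddSubgroup.finiteIndex_iInf fun q => hcomapfi _
  haveI hIfi : I.FiniteIndex := inferInstance
  refine ⟨I, ?_, ?_, hIfi, ?_⟩
  · -- left ideal
    intro r x hx
    refine ⟨hIP x hx r, AddSubgroup.mem_iInf.mpr fun q => ?_⟩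
    simp only [AddSubgroup.mem_comap, AddMonoidHom.coe_mulLeft]
    rw [← mul_assoc]
    exact hIP x hx _
  · -- right ideal
    intro r x hx
    obtain ⟨hxP, hxq⟩ := hx
    refine ⟨hPr x hxP r, AddSubgroup.mem_iInf.mpr fun q => ?_⟩
    simp only [AddSubgroup.mem_comap, AddMonoidHom.coe_mulLeft]
    rw [← mul_assoc]
    refine hPr _ ?_ r
    have := AddSubgroup.mem_iInf.mp hxq q
    simpa only [AddSubgroup.mem_comap, AddMonoidHom.coe_mulLeft] using this
  · -- containment
    intro x hx
    have hxG : x ∈ G := hPG hx.1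
    rw [hG] at hxG
    obtain ⟨y, hy, z, hz, hyz⟩ := AddSubgroup.mem_sup.mp hxG
    obtain ⟨r, -, rfl⟩ := hz
    rw [← hyz]
    exact Set.add_mem_add hy (Set.mul_mem_mul hcH (Set.mem_univ r))
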